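/- If a, b ∈ ℂ satisfy max{|a|, |b|} ≤ 2/π, then there exists a harmonic mapping u : 𝔻 → 𝔻 with u(0) = 0, ∂u(0) = a, and ∂̄u(0) = b. -/

import Mathlib

open Metric Set

/-- `u` is harmonic on the unit disc: it is `C²` there and its Laplacian vanishes at
every point of the disc. -/
def HarmonicOnDisc {E : Type*} [NormedAddCommGroup E] [NormedSpace ℝ E] (u : ℂ → E) : Prop :=
  ContDiffOn ℝ 2 u (ball 0 1) ∧
  ∀ z ∈ ball (0 : ℂ) 1,
    fderiv ℝ (fun w => fderiv ℝ u w 1) z 1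
      + fderiv ℝ (fun w => fderiv ℝ u w Complex.I) z Complex.I = 0

namespace Stmt18Aux

open Complex

noncomputable def gg (z : ℂ) : ℂ := Complex.log ((1 + z) / (1 - z))

lemma sub_ne (z : ℂ) (hz : ‖z‖ < 1) : (1 : ℂ) - z ≠ 0 := by
  intro h
  have : z = 1 := by linear_combination -h
  simp [this] at hz

lemma re_pos (z : ℂ) (hz : ‖z‖ < 1) : 0 < ((1 + z) / (1 - z)).re := by
  have h1 : Complex.normSq z < 1 := by
    have := Complex.sq_norm z
    nlinarith [norm_nonneg z]
  have h2 : (0:ℝ) < Complex.normSq (1 - z) :=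
    Complex.normSq_pos.mpr (sub_ne z hz)
  rw [Complex.normSq_apply] at h1 h2
  simp only [Complex.sub_re, Complex.sub_im, Complex.one_re, Complex.one_im] at h2
  rw [Complex.div_re]
  simp only [Complex.add_re, Complex.add_im, Complex.one_re, Complex.one_im,
    Complex.sub_re, Complex.sub_im, Complex.normSq_apply]
  rw [← add_div]
  apply div_pos _ h2
  nlinarith

lemma slit (z : ℂ) (hz : ‖z‖ < 1) : ((1 + z) / (1 - z)) ∈ Complex.slitPlane :=
  Complex.mem_slitPlane_iff.mpr (Or.inl (re_pos z hz))

lemma gg_diff (z : ℂ) (hz : ‖z‖ < 1) : DifferentiableAt ℂ gg z := by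
  have h1 : DifferentiableAt ℂ (fun w => (1 + w) / (1 - w)) z :=
    DifferentiableAt.div (by fun_prop) (by fun_prop) (sub_ne z hz)
  exact (Complex.differentiableAt_log (slit z hz)).comp z h1

lemma gg_im (z : ℂ) (hz : ‖z‖ < 1) : |(gg z).im| < Real.pi / 2 := by
  rw [gg, Complex.log_im]
  exact Complex.abs_arg_lt_pi_div_two_iff.mpr (Or.inl (re_pos z hz))

lemma gg_deriv : HasDerivAt gg 2 0 := by
  have h1 : HasDerivAt (fun w : ℂ => (1 + w) / (1 - w))
      ((1 * (1 - 0) - (1 + 0) * (-1)) / (1 - (0:ℂ)) ^ 2) 0 := by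
    exact HasDerivAt.div ((hasDerivAt_id (0:ℂ)).const_add 1)
      (((hasDerivAt_id (0:ℂ)).neg).const_add 1 |>.congr_deriv rfl) (by norm_num)
  have h1' : HasDerivAt (fun w : ℂ => (1 + w) / (1 - w)) 2 0 := by
    convert h1 using 1 <;> norm_num
  have h2 : HasDerivAt Complex.log (((1:ℂ) + 0) / (1 - 0))⁻¹ ((1 + (0:ℂ)) / (1 - 0)) :=
    Complex.hasDerivAt_log (by norm_num [Complex.mem_slitPlane_iff])
  have := h2.comp 0 h1'
  norm_num at this
  exact this

lemma gg_zero : gg 0 = 0 := by simp [gg]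

lemma hasfd (F G : ℂ → ℂ) (w : ℂ) (hF : DifferentiableAt ℂ F w) (hG : DifferentiableAt ℂ G w) :
    HasFDerivAt (fun z => F z + (starRingEnd ℂ) (G z))
      (((1 : ℂ →L[ℂ] ℂ).smulRight (deriv F w)).restrictScalars ℝ
        + Complex.conjCLE.toContinuousLinearMap.comp
          (((1 : ℂ →L[ℂ] ℂ).smulRight (deriv G w)).restrictScalars ℝ)) w := by
  have h1 : HasFDerivAt F (((1 : ℂ →L[ℂ] ℂ).smulRight (deriv F w)).restrictScalars ℝ) w :=
    (hF.hasDerivAt.hasFDerivAt).restrictScalars ℝ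
  have h2 : HasFDerivAt G (((1 : ℂ →L[ℂ] ℂ).smulRight (deriv G w)).restrictScalars ℝ) w :=
    (hG.hasDerivAt.hasFDerivAt).restrictScalars ℝ
  have h3 := (Complex.conjCLE.toContinuousLinearMap.hasFDerivAt (x := G w)).comp w h2
  exact h1.add h3

lemma fderiv_FG (F G : ℂ → ℂ) (w : ℂ) (hF : DifferentiableAt ℂ F w)
    (hG : DifferentiableAt ℂ G w) (v : ℂ) :
    fderiv ℝ (fun z => F z + (starRingEnd ℂ) (G z)) w v
      = v * deriv F w + (starRingEnd ℂ) (v * deriv G w) := by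
  rw [(hasfd F G w hF hG).fderiv]
  simp [Complex.conjCLE_apply, smul_eq_mul, mul_comm]

lemma harmonic_FG (F G : ℂ → ℂ) (hF : DifferentiableOn ℂ F (ball 0 1))
    (hG : DifferentiableOn ℂ G (ball 0 1)) :
    HarmonicOnDisc (fun z => F z + (starRingEnd ℂ) (G z)) := by
  have hFa : AnalyticOnNhd ℂ F (ball 0 1) := hF.analyticOnNhd isOpen_ball
  have hGa : AnalyticOnNhd ℂ G (ball 0 1) := hG.analyticOnNhd isOpen_ball
  have hFd : ∀ z ∈ ball (0:ℂ) 1, DifferentiableAt ℂ F z := fun z hz => (hFa z hz).differentiableAt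
  have hGd : ∀ z ∈ ball (0:ℂ) 1, DifferentiableAt ℂ G z := fun z hz => (hGa z hz).differentiableAt
  have hFd' : ∀ z ∈ ball (0:ℂ) 1, DifferentiableAt ℂ (deriv F) z :=
    fun z hz => ((hFa.deriv) z hz).differentiableAt
  have hGd' : ∀ z ∈ ball (0:ℂ) 1, DifferentiableAt ℂ (deriv G) z :=
    fun z hz => ((hGa.deriv) z hz).differentiableAt
  constructor
  · apply ContDiffOn.add
    · exact (hF.contDiffOn isOpen_ball).restrict_scalars ℝ
    · have : ContDiffOn ℝ 2 G (ball 0 1) := (hG.contDiffOn isOpen_ball).restrict_scalars ℝ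
      exact Complex.conjCLE.contDiff.comp_contDiffOn this
  · intro z hz
    have hmem : ball (0:ℂ) 1 ∈ nhds z := isOpen_ball.mem_nhds hz
    have key : ∀ v : ℂ,
        fderiv ℝ (fun w => fderiv ℝ (fun z => F z + (starRingEnd ℂ) (G z)) w v) z v
          = v * (v * deriv (deriv F) z) + (starRingEnd ℂ) (v * (v * deriv (deriv G) z)) := by
      intro v
      have hev : (fun w => fderiv ℝ (fun z => F z + (starRingEnd ℂ) (G z)) w v)
          =ᶠ[nhds z] (fun w => (fun w => v * deriv F w) w
            + (starRingEnd ℂ) ((fun w => v * deriv G w) w)) := by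
        filter_upwards [hmem] with w hw
        exact fderiv_FG F G w (hFd w hw) (hGd w hw) v
      rw [hev.fderiv_eq]
      rw [fderiv_FG _ _ z ((hFd' z hz).const_mul v) ((hGd' z hz).const_mul v) v]
      rw [deriv_const_mul v (hFd' z hz), deriv_const_mul v (hGd' z hz)]
    rw [key 1, key Complex.I]
    simp only [one_mul]
    set p := deriv (deriv F) z
    set q := deriv (deriv G) z
    rw [show Complex.I * (Complex.I * p) = -p by
      rw [← mul_assoc, Complex.I_mul_I]; ring]
    rw [show Complex.I * (Complex.I * q) = -q by
      rw [← mul_assoc, Complex.I_mul_I]; ring]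
    rw [map_neg]; ring

lemma abs_eq_one_of_normSq (P : ℂ) (h : Complex.normSq P = 1) : ‖P‖ = 1 := by
  have h2 := Complex.sq_norm P
  nlinarith [norm_nonneg P]

lemma two_pt (w : ℂ) (hw : ‖w‖ ≤ 2) :
    ∃ P₁ P₂ : ℂ, ‖P₁‖ = 1 ∧ ‖P₂‖ = 1 ∧ P₁ + P₂ = w := by
  rcases eq_or_ne w 0 with h | h
  · exact ⟨1, -1, by simp, by simp, by simp [h]⟩
  · set m := ‖w‖ with hm
    have hm0 : 0 < m := norm_pos_iff.mpr h
    set t : ℝ := Real.sqrt (1 - m ^ 2 / 4) with ht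
    have ht2 : t ^ 2 = 1 - m ^ 2 / 4 := Real.sq_sqrt (by nlinarith)
    have hsq : Complex.normSq w = m ^ 2 := by rw [← Complex.sq_norm]
    refine ⟨w * (((1/2 : ℝ) : ℂ) + ((t / m : ℝ) : ℂ) * I),
      w * (((1/2 : ℝ) : ℂ) - ((t / m : ℝ) : ℂ) * I), ?_, ?_, by push_cast; ring⟩
    · apply abs_eq_one_of_normSq
      rw [map_mul, Complex.normSq_add_mul_I, hsq]
      field_simp
      nlinarith
    · apply abs_eq_one_of_normSq
      rw [map_mul, show (((1/2 : ℝ) : ℂ) - ((t / m : ℝ) : ℂ) * I)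
        = (((1/2 : ℝ) : ℂ) + ((-(t / m) : ℝ) : ℂ) * I) by push_cast; ring,
        Complex.normSq_add_mul_I, hsq]
      field_simp
      nlinarith

lemma solve_cl (P Q : ℂ) (hP : ‖P‖ = 1) (hQ : ‖Q‖ = 1) :
    ∃ c l : ℂ, ‖c‖ = 1 ∧ ‖l‖ = 1 ∧ c * l = P ∧
      c * (starRingEnd ℂ) l = Q := by
  have hP0 : P ≠ 0 := by intro h; simp [h] at hP
  have hQ0 : Q ≠ 0 := by intro h; simp [h] at hQ
  set c : ℂ := Complex.exp (Complex.log (P * Q) / 2) with hc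
  have hc1 : ‖c‖ = 1 := by
    rw [hc, Complex.norm_exp]
    have : (Complex.log (P * Q) / 2).re = Real.log (‖(P * Q)‖) / 2 := by
      rw [Complex.div_re]
      simp [Complex.log_re]
      ring
    rw [this, norm_mul, hP, hQ]
    norm_num
  have hc2 : c * c = P * Q := by
    rw [hc, ← Complex.exp_add]
    rw [show Complex.log (P * Q) / 2 + Complex.log (P * Q) / 2 = Complex.log (P * Q) by ring]
    exact Complex.exp_log (mul_ne_zero hP0 hQ0)
  have hcc : c * (starRingEnd ℂ) c = 1 := by
    rw [Complex.mul_conj]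
    norm_cast
    rw [← Complex.sq_norm, hc1]; norm_num
  have hPP : P * (starRingEnd ℂ) P = 1 := by
    rw [Complex.mul_conj]
    norm_cast
    rw [← Complex.sq_norm, hP]; norm_num
  refine ⟨c, P * (starRingEnd ℂ) c, hc1, by rw [norm_mul, Complex.norm_conj, hP, hc1]; norm_num,
    by linear_combination P * hcc, ?_⟩
  rw [map_mul, Complex.conj_conj]
  linear_combination Q * hPP + (starRingEnd ℂ) P * hc2

lemma term_diffOn (β l : ℂ) (hl : ‖l‖ = 1) :
    DifferentiableOn ℂ (fun z => β * gg (l * z)) (ball 0 1) := by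
  intro z hz
  have hz' : ‖(l * z)‖ < 1 := by
    rw [norm_mul, hl, one_mul]
    simpa [mem_ball_zero_iff] using hz
  exact (((gg_diff _ hz').comp z ((differentiableAt_id).const_mul l)).const_mul
    β).differentiableWithinAt

lemma term_deriv (β l : ℂ) : HasDerivAt (fun z => β * gg (l * z)) (β * (2 * l)) 0 := by
  have h0 : HasDerivAt (fun z : ℂ => l * z) l 0 := by
    simpa using (hasDerivAt_id (0:ℂ)).const_mul l
  have h1 : HasDerivAt gg 2 (l * 0) := by rw [mul_zero]; exact gg_deriv
  exact (h1.comp 0 h0).const_mul β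

lemma term_bound (cc l z : ℂ) (hcc : ‖cc‖ = 1) (hl : ‖l‖ = 1)
    (hz : ‖z‖ < 1) :
    ‖(cc / (4 * (Real.pi : ℂ) * I) * (gg (l * z) - (starRingEnd ℂ) (gg (l * z))))‖
      < 1/4 := by
  have hπ := Real.pi_pos
  have hz' : ‖(l * z)‖ < 1 := by rw [norm_mul, hl, one_mul]; exact hz
  have him := gg_im _ hz'
  rw [Complex.sub_conj]
  simp only [norm_mul, norm_div, hcc, Complex.norm_real, Real.norm_eq_abs, Complex.norm_I,
    Complex.norm_ofNat, mul_one, abs_of_pos hπ, one_mul]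
  have h2 : |2 * (gg (l * z)).im| = 2 * |(gg (l * z)).im| := by
    rw [abs_mul]; norm_num
  rw [abs_two, div_mul_eq_mul_div, one_mul, div_lt_iff₀ (by positivity)]
  nlinarith

lemma abs_add_four (w x y v : ℂ) :
    ‖(w + x + y + v)‖
      ≤ ‖w‖ + ‖x‖ + ‖y‖ + ‖v‖ := by
  have h1 := norm_add_le (w + x + y) v
  have h2 := norm_add_le (w + x) y
  have h3 := norm_add_le w x
  linarith

end Stmt18Aux

open Complex Stmt18Aux in
/-- If `a, b ∈ ℂ` satisfy `max{|a|,|b|} ≤ 2/π`, then there exists a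
harmonic mapping `u : 𝔻 → 𝔻` with `u(0) = 0`, `∂u(0) = a`, and `∂̄u(0) = b`, where
`∂u = (1/2)(uₓ − i·u_y)` and `∂̄u = (1/2)(uₓ + i·u_y)`. -/
theorem stmt18 (a b : ℂ) (hab : max ‖a‖ ‖b‖ ≤ 2 / Real.pi) :
    ∃ u : ℂ → ℂ, HarmonicOnDisc u ∧ MapsTo u (ball 0 1) (ball 0 1) ∧ u 0 = 0 ∧
      (1 / 2) * (fderiv ℝ u 0 1 - Complex.I * fderiv ℝ u 0 Complex.I) = a ∧
      (1 / 2) * (fderiv ℝ u 0 1 + Complex.I * fderiv ℝ u 0 Complex.I) = b := by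
  have hπ : (0:ℝ) < Real.pi := Real.pi_pos
  have ha : ‖a‖ ≤ 2 / Real.pi := le_trans (le_max_left _ _) hab
  have hb : ‖b‖ ≤ 2 / Real.pi := le_trans (le_max_right _ _) hab
  have hwa : ‖((Real.pi : ℂ) * I * a)‖ ≤ 2 := by
    rw [norm_mul, norm_mul, Complex.norm_real, Complex.norm_I, Real.norm_of_nonneg hπ.le, mul_one]
    calc Real.pi * ‖a‖ ≤ Real.pi * (2 / Real.pi) :=
          mul_le_mul_of_nonneg_left ha hπ.le
      _ = 2 := by field_simp
  have hwb : ‖(-((Real.pi : ℂ) * I * b))‖ ≤ 2 := by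
    rw [norm_neg, norm_mul, norm_mul, Complex.norm_real, Complex.norm_I, Real.norm_of_nonneg hπ.le, mul_one]
    calc Real.pi * ‖b‖ ≤ Real.pi * (2 / Real.pi) :=
          mul_le_mul_of_nonneg_left hb hπ.le
      _ = 2 := by field_simp
  obtain ⟨P₁, P₂, hP₁, hP₂, hPsum⟩ := two_pt _ hwa
  obtain ⟨Q₁, Q₂, hQ₁, hQ₂, hQsum⟩ := two_pt _ hwb
  obtain ⟨c₁, l₁, hc₁, hl₁, hcl₁, hcq₁⟩ := solve_cl P₁ Q₁ hP₁ hQ₁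
  obtain ⟨c₂, l₂, hc₂, hl₂, hcl₂, hcq₂⟩ := solve_cl P₁ Q₂ hP₁ hQ₂
  obtain ⟨c₃, l₃, hc₃, hl₃, hcl₃, hcq₃⟩ := solve_cl P₂ Q₁ hP₂ hQ₁
  obtain ⟨c₄, l₄, hc₄, hl₄, hcl₄, hcq₄⟩ := solve_cl P₂ Q₂ hP₂ hQ₂
  have hd0 : (4 * (Real.pi : ℂ) * I) ≠ 0 := by
    simp [Complex.ext_iff, Real.pi_ne_zero]
  set F : ℂ → ℂ := fun z =>
    (c₁ / (4 * (Real.pi : ℂ) * I)) * gg (l₁ * z) + (c₂ / (4 * (Real.pi : ℂ) * I)) * gg (l₂ * z)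
      + (c₃ / (4 * (Real.pi : ℂ) * I)) * gg (l₃ * z) + (c₄ / (4 * (Real.pi : ℂ) * I)) * gg (l₄ * z) with hF
  set G : ℂ → ℂ := fun z =>
    (starRingEnd ℂ) (-(c₁ / (4 * (Real.pi : ℂ) * I))) * gg (l₁ * z) + (starRingEnd ℂ) (-(c₂ / (4 * (Real.pi : ℂ) * I))) * gg (l₂ * z)
      + (starRingEnd ℂ) (-(c₃ / (4 * (Real.pi : ℂ) * I))) * gg (l₃ * z)
      + (starRingEnd ℂ) (-(c₄ / (4 * (Real.pi : ℂ) * I))) * gg (l₄ * z) with hG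
  have hFdiff : DifferentiableOn ℂ F (ball 0 1) :=
    ((((term_diffOn _ _ hl₁).add (term_diffOn _ _ hl₂)).add
      (term_diffOn _ _ hl₃)).add (term_diffOn _ _ hl₄))
  have hGdiff : DifferentiableOn ℂ G (ball 0 1) :=
    ((((term_diffOn _ _ hl₁).add (term_diffOn _ _ hl₂)).add
      (term_diffOn _ _ hl₃)).add (term_diffOn _ _ hl₄))
  have hFA : HasDerivAt F ((c₁ / (4 * (Real.pi : ℂ) * I)) * (2 * l₁) + (c₂ / (4 * (Real.pi : ℂ) * I)) * (2 * l₂)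
      + (c₃ / (4 * (Real.pi : ℂ) * I)) * (2 * l₃) + (c₄ / (4 * (Real.pi : ℂ) * I)) * (2 * l₄)) 0 :=
    (((term_deriv _ _).add (term_deriv _ _)).add (term_deriv _ _)).add (term_deriv _ _)
  have hGA : HasDerivAt G ((starRingEnd ℂ) (-(c₁ / (4 * (Real.pi : ℂ) * I))) * (2 * l₁)
      + (starRingEnd ℂ) (-(c₂ / (4 * (Real.pi : ℂ) * I))) * (2 * l₂) + (starRingEnd ℂ) (-(c₃ / (4 * (Real.pi : ℂ) * I))) * (2 * l₃)
      + (starRingEnd ℂ) (-(c₄ / (4 * (Real.pi : ℂ) * I))) * (2 * l₄)) 0 :=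
    (((term_deriv _ _).add (term_deriv _ _)).add (term_deriv _ _)).add (term_deriv _ _)
  have hud : ∀ v : ℂ, fderiv ℝ (fun z => F z + (starRingEnd ℂ) (G z)) 0 v
      = v * deriv F 0 + (starRingEnd ℂ) (v * deriv G 0) := fun v =>
    fderiv_FG F G 0 hFA.differentiableAt hGA.differentiableAt v
  have hA : deriv F 0 = a := by
    rw [hFA.deriv]
    rw [div_mul_eq_mul_div, div_mul_eq_mul_div, div_mul_eq_mul_div, div_mul_eq_mul_div]
    rw [← add_div, ← add_div, ← add_div, div_eq_iff hd0]
    linear_combination 2 * hcl₁ + 2 * hcl₂ + 2 * hcl₃ + 2 * hcl₄ + 4 * hPsum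
  have hB : (starRingEnd ℂ) (deriv G 0) = b := by
    rw [hGA.deriv]
    simp only [map_add, map_mul, map_neg, Complex.conj_conj, map_div₀, map_ofNat,
      Complex.conj_ofReal, Complex.conj_I]
    simp only [neg_mul, div_mul_eq_mul_div, ← neg_div, neg_neg]
    rw [← add_div, ← add_div, ← add_div, div_eq_iff hd0]
    linear_combination (-2) * hcq₁ + (-2) * hcq₂ + (-2) * hcq₃ + (-2) * hcq₄ - 4 * hQsum
  refine ⟨fun z => F z + (starRingEnd ℂ) (G z), harmonic_FG F G hFdiff hGdiff, ?_, ?_, ?_, ?_⟩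
  · intro z hz
    rw [mem_ball_zero_iff] at hz
    have hz' : ‖z‖ < 1 := hz
    rw [mem_ball_zero_iff]
    show ‖F z + (starRingEnd ℂ) (G z)‖ < 1
    have hrw : F z + (starRingEnd ℂ) (G z)
        = (c₁ / (4 * (Real.pi : ℂ) * I)) * (gg (l₁ * z) - (starRingEnd ℂ) (gg (l₁ * z)))
          + (c₂ / (4 * (Real.pi : ℂ) * I)) * (gg (l₂ * z) - (starRingEnd ℂ) (gg (l₂ * z)))
          + (c₃ / (4 * (Real.pi : ℂ) * I)) * (gg (l₃ * z) - (starRingEnd ℂ) (gg (l₃ * z)))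
          + (c₄ / (4 * (Real.pi : ℂ) * I)) * (gg (l₄ * z) - (starRingEnd ℂ) (gg (l₄ * z))) := by
      simp only [hF, hG, map_add, map_mul, map_neg, Complex.conj_conj]
      ring
    rw [hrw]
    have b1 := term_bound c₁ l₁ z hc₁ hl₁ hz'
    have b2 := term_bound c₂ l₂ z hc₂ hl₂ hz'
    have b3 := term_bound c₃ l₃ z hc₃ hl₃ hz'
    have b4 := term_bound c₄ l₄ z hc₄ hl₄ hz'
    refine lt_of_le_of_lt (abs_add_four _ _ _ _) ?_
    linarith
  · simp [hF, hG, mul_zero, gg_zero]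
  · rw [hud 1, hud Complex.I, hA]
    simp only [one_mul, map_mul, Complex.conj_I]
    rw [hB]
    linear_combination ((b - a)/2) * Complex.I_sq
  · rw [hud 1, hud Complex.I, hA]
    simp only [one_mul, map_mul, Complex.conj_I]
    rw [hB]
    linear_combination ((a - b)/2) * Complex.I_sq
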